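/- Let (Ω, μ) be a finite measure space, d ≥ 1, and let γ : ℝ → ℝ be continuous on [0,∞) with 0 < γ_min ≤ γ(t) ≤ γ_max for all t ≥ 0 and such that the limit γ(∞) := lim_{τ→∞} γ(τ) exists. Let (g_n) ⊂ L²(μ; ℝ^d) with sup_n ∫_Ω |g_n|² dμ ≤ M < ∞, let (t_n) be positive real numbers with t_n → 0, and let h ∈ L²(μ; ℝ^d). Then ∫_Ω ( γ(|g_n(x)|²/(2 t_n²)) − γ(∞) ) ⟨g_n(x), h(x)⟩ dμ(x) → 0 as n → ∞. -/

import Mathlib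

open Filter MeasureTheory Topology Real Set
open scoped RealInnerProductSpace

lemma stmt6_aux (γ : ℝ → ℝ) (L γmin γmax ε' T tn G H I : ℝ)
    (hγbound : ∀ t : ℝ, 0 ≤ t → γmin ≤ γ t ∧ γ t ≤ γmax) (hγmin : 0 < γmin)
    (hT : ∀ τ : ℝ, τ ≥ T → |γ τ - L| < ε') (hε' : 0 < ε')
    (htn : 0 < tn) (hG : 0 ≤ G) (hH : 0 ≤ H) (hI0 : 0 ≤ I) (hI : I ≤ G * H) :
    |γ (G ^ 2 / (2 * tn ^ 2)) - L| * I ≤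
      ε' / 2 * (G ^ 2 + H ^ 2) +
        (γmax + |L|) * Real.sqrt (2 * max T 1) * tn * H := by
  set T' : ℝ := max T 1 with hT'def
  have hT'1 : (1 : ℝ) ≤ T' := le_max_right _ _
  set s : ℝ := Real.sqrt (2 * T') with hsdef
  have hs : 0 < s := Real.sqrt_pos.2 (by linarith)
  have hs2 : s ^ 2 = 2 * T' := Real.sq_sqrt (by linarith)
  have hγmax : 0 < γmax := lt_of_lt_of_le hγmin
    (le_trans (hγbound 0 le_rfl).1 (hγbound 0 le_rfl).2)
  have hC : 0 < γmax + |L| := by positivity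
  have ha0 : (0:ℝ) ≤ G ^ 2 / (2 * tn ^ 2) := by positivity
  set a : ℝ := G ^ 2 / (2 * tn ^ 2) with hadef
  rcases le_or_gt T' a with hcase | hcase
  · have h1 : |γ a - L| ≤ ε' := le_of_lt (hT a (le_trans (le_max_left _ _) hcase))
    have h2 : |γ a - L| * I ≤ ε' * (G * H) :=
      mul_le_mul h1 (le_trans hI le_rfl) hI0 (le_of_lt hε')
    have hamgm : G * H ≤ (G ^ 2 + H ^ 2) / 2 := by nlinarith [sq_nonneg (G - H)]
    have h3 : ε' * (G * H) ≤ ε' / 2 * (G ^ 2 + H ^ 2) := by nlinarith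
    have h4 : 0 ≤ (γmax + |L|) * s * tn * H := by positivity
    linarith
  · have hγa := hγbound a ha0
    have h1 : |γ a - L| ≤ γmax + |L| := by
      have hγabs : |γ a| ≤ γmax := abs_le.2 ⟨by linarith, hγa.2⟩
      calc |γ a - L| ≤ |γ a| + |L| := abs_sub _ _
        _ ≤ γmax + |L| := by linarith
    have hGsmall : G ≤ tn * s := by
      have h2 : G ^ 2 < 2 * T' * tn ^ 2 := by
        have := (div_lt_iff₀ (by positivity : (0:ℝ) < 2 * tn ^ 2)).1 hcase
        nlinarith
      have h3 : (tn * s) ^ 2 = 2 * T' * tn ^ 2 := by rw [mul_pow, hs2]; ring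
      nlinarith [mul_pos htn hs]
    have h2 : |γ a - L| * I ≤ (γmax + |L|) * (G * H) :=
      mul_le_mul h1 hI hI0 (le_of_lt hC)
    have h3 : (γmax + |L|) * (G * H) ≤ (γmax + |L|) * s * tn * H := by
      have := mul_le_mul_of_nonneg_right hGsmall hH
      nlinarith
    have h4 : 0 ≤ ε' / 2 * (G ^ 2 + H ^ 2) := by positivity
    linarith

/-- Convergence of the quasilinear terms (Appendix Proposition A.1):
`∫ (γ(|g_n|²/(2t_n²)) − γ(∞)) ⟨g_n, h⟩ dμ → 0`. -/
theorem stmt_6 {Ω : Type*} [MeasurableSpace Ω] (μ : Measure Ω)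
    [IsFiniteMeasure μ]
    (d : ℕ) (hd : 1 ≤ d) (γ : ℝ → ℝ) (γmin γmax L : ℝ)
    (hγcont : ContinuousOn γ (Set.Ici (0 : ℝ)))
    (hγmin : 0 < γmin)
    (hγbound : ∀ t : ℝ, 0 ≤ t → γmin ≤ γ t ∧ γ t ≤ γmax)
    (hγlim : Tendsto γ atTop (𝓝 L))
    (g : ℕ → Ω → EuclideanSpace ℝ (Fin d)) (M : ℝ)
    (hg : ∀ n, MemLp (g n) 2 μ)
    (hgbound : ∀ n, ∫ x, ‖g n x‖ ^ 2 ∂μ ≤ M)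
    (t : ℕ → ℝ) (ht : ∀ n, 0 < t n) (htlim : Tendsto t atTop (𝓝 0))
    (h : Ω → EuclideanSpace ℝ (Fin d)) (hh : MemLp h 2 μ) :
    Tendsto
      (fun n => ∫ x, (γ (‖g n x‖ ^ 2 / (2 * (t n) ^ 2)) - L) * ⟪g n x, h x⟫ ∂μ)
      atTop (𝓝 0) := by
  set C : ℝ := γmax + |L| with hCdef
  have hγmax : 0 < γmax := lt_of_lt_of_le hγmin (le_trans (hγbound 0 le_rfl).1 (hγbound 0 le_rfl).2)
  have hC : 0 < C := by positivity
  have hIg2 : ∀ n, Integrable (fun x => ‖g n x‖ ^ 2) μ := fun n => (hg n).norm.integrable_sq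
  have hIh2 : Integrable (fun x => ‖h x‖ ^ 2) μ := hh.norm.integrable_sq
  have hIh1 : Integrable (fun x => ‖h x‖) μ := (hh.integrable one_le_two).norm
  have hIh1nn : 0 ≤ ∫ x, ‖h x‖ ∂μ := integral_nonneg fun x => norm_nonneg _
  have hIh2nn : 0 ≤ ∫ x, ‖h x‖ ^ 2 ∂μ := integral_nonneg fun x => sq_nonneg _
  have hM : 0 ≤ M := le_trans (integral_nonneg fun x => sq_nonneg _) (hgbound 0)
  set K : ℝ := (M + ∫ x, ‖h x‖ ^ 2 ∂μ) / 2 with hKdef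
  have hK : 0 ≤ K := by positivity
  rw [NormedAddCommGroup.tendsto_nhds_zero]
  intro ε hε
  set ε' : ℝ := ε / (2 * (K + 1)) with hε'def
  have hε' : 0 < ε' := by positivity
  obtain ⟨T, hT⟩ := (Metric.tendsto_atTop.1 hγlim) ε' hε'
  have hT' : ∀ τ : ℝ, τ ≥ T → |γ τ - L| < ε' := fun τ hτ => by
    have := hT τ hτ; rwa [Real.dist_eq] at this
  set s : ℝ := Real.sqrt (2 * max T 1) with hsdef
  have hs : 0 < s := Real.sqrt_pos.2 (by
    have : (1:ℝ) ≤ max T 1 := le_max_right _ _; linarith)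
  set D : ℝ := C * s * ∫ x, ‖h x‖ ∂μ with hDdef
  have hD : 0 ≤ D := by positivity
  have hev : ∀ᶠ n in atTop, D * t n < ε / 2 := by
    have h1 : Tendsto (fun n => D * t n) atTop (𝓝 (D * 0)) := htlim.const_mul D
    rw [mul_zero] at h1
    exact h1.eventually (gt_mem_nhds (by positivity : (0:ℝ) < ε / 2))
  filter_upwards [hev] with n hn
  have hbound : ∀ x, |(γ (‖g n x‖ ^ 2 / (2 * t n ^ 2)) - L) * ⟪g n x, h x⟫| ≤
      ε' / 2 * (‖g n x‖ ^ 2 + ‖h x‖ ^ 2) + C * s * t n * ‖h x‖ := by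
    intro x
    rw [abs_mul]
    exact stmt6_aux γ L γmin γmax ε' T (t n) (‖g n x‖) (‖h x‖) _ hγbound hγmin hT' hε'
      (ht n) (norm_nonneg _) (norm_nonneg _) (abs_nonneg _) (abs_real_inner_le_norm _ _)
  have hImaj : Integrable (fun x => ε' / 2 * (‖g n x‖ ^ 2 + ‖h x‖ ^ 2) + C * s * t n * ‖h x‖) μ :=
    (((hIg2 n).add hIh2).const_mul _).add (hIh1.const_mul _)
  have step1 : ‖∫ x, (γ (‖g n x‖ ^ 2 / (2 * t n ^ 2)) - L) * ⟪g n x, h x⟫ ∂μ‖ ≤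
      ∫ x, ε' / 2 * (‖g n x‖ ^ 2 + ‖h x‖ ^ 2) + C * s * t n * ‖h x‖ ∂μ := by
    refine le_trans (norm_integral_le_integral_norm _) ?_
    refine integral_mono_of_nonneg (Eventually.of_forall fun x => norm_nonneg _) hImaj
      (Eventually.of_forall fun x => ?_)
    simpa only [Real.norm_eq_abs] using hbound x
  have step2 : ∫ x, ε' / 2 * (‖g n x‖ ^ 2 + ‖h x‖ ^ 2) + C * s * t n * ‖h x‖ ∂μ =
      ε' / 2 * ((∫ x, ‖g n x‖ ^ 2 ∂μ) + ∫ x, ‖h x‖ ^ 2 ∂μ) + C * s * t n * ∫ x, ‖h x‖ ∂μ := by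
    have hI12 : Integrable (fun x => ε' / 2 * (‖g n x‖ ^ 2 + ‖h x‖ ^ 2)) μ :=
      ((hIg2 n).add hIh2).const_mul _
    have hIc : Integrable (fun x => C * s * t n * ‖h x‖) μ := hIh1.const_mul _
    rw [integral_add hI12 hIc, integral_const_mul, integral_const_mul,
      integral_add (hIg2 n) hIh2]
  have hterm1 : ε' / 2 * ((∫ x, ‖g n x‖ ^ 2 ∂μ) + ∫ x, ‖h x‖ ^ 2 ∂μ) ≤ ε / 2 := by
    have h1 : (∫ x, ‖g n x‖ ^ 2 ∂μ) + ∫ x, ‖h x‖ ^ 2 ∂μ ≤ 2 * K := by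
      rw [hKdef]; have := hgbound n; linarith
    have h0 : 0 ≤ (∫ x, ‖g n x‖ ^ 2 ∂μ) + ∫ x, ‖h x‖ ^ 2 ∂μ :=
      add_nonneg (integral_nonneg fun x => sq_nonneg _) hIh2nn
    have h2 : ε' / 2 * ((∫ x, ‖g n x‖ ^ 2 ∂μ) + ∫ x, ‖h x‖ ^ 2 ∂μ) ≤ ε' / 2 * (2 * K) :=
      mul_le_mul_of_nonneg_left h1 (by positivity)
    have h3 : ε' / 2 * (2 * K) = ε * (K / (2 * (K + 1))) := by rw [hε'def]; ring
    have h4 : K / (2 * (K + 1)) ≤ 1 / 2 := by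
      rw [div_le_div_iff₀ (by positivity) (by norm_num)]; linarith
    have h5 : ε * (K / (2 * (K + 1))) ≤ ε * (1 / 2) :=
      mul_le_mul_of_nonneg_left h4 (le_of_lt hε)
    linarith
  have hterm2 : C * s * t n * ∫ x, ‖h x‖ ∂μ < ε / 2 := by
    calc C * s * t n * ∫ x, ‖h x‖ ∂μ = D * t n := by rw [hDdef]; ring
      _ < ε / 2 := hn
  calc ‖∫ x, (γ (‖g n x‖ ^ 2 / (2 * t n ^ 2)) - L) * ⟪g n x, h x⟫ ∂μ‖
      ≤ ε' / 2 * ((∫ x, ‖g n x‖ ^ 2 ∂μ) + ∫ x, ‖h x‖ ^ 2 ∂μ) + C * s * t n * ∫ x, ‖h x‖ ∂μ := by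
        rw [← step2]; exact step1
    _ < ε / 2 + ε / 2 := by linarith
    _ = ε := by ring
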